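/- Let k be a perfect field, K a finitely generated field extension of k, and k′ the algebraic closure of k in K. Let κ be a field extension of k′ of finite degree. Then the tensor product K ⊗_{k′} κ is a field, and the field extension (K ⊗_{k′} κ)/K (where K is embedded as K ⊗ 1) has degree [κ : k′]. -/

import Mathlib

open TensorProduct

open Polynomial in

theorem irreducible_map_of_integral_mem_bot {F E : Type*} [Field F] [Field E] [Algebra F E]
    (halg : ∀ x : E, IsIntegral F x → x ∈ (⊥ : IntermediateField F E))
    {f : F[X]} (hm : f.Monic) (hirr : Irreducible f) :
    Irreducible (f.map (algebraMap F E)) := by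
  have hinj : Function.Injective (algebraMap F E) := (algebraMap F E).injective
  have hmE : (f.map (algebraMap F E)).Monic := hm.map _
  have hdegpos : 0 < f.degree := Polynomial.degree_pos_of_irreducible hirr
  constructor
  · refine Polynomial.not_isUnit_of_degree_pos _ ?_
    rwa [Polynomial.degree_map_eq_of_injective hinj]
  · intro a b hab
    by_contra hcon
    push_neg at hcon
    obtain ⟨ha, hb⟩ := hcon
    have hab0 : a * b ≠ 0 := hab ▸ hmE.ne_zero
    have ha0 : a ≠ 0 := left_ne_zero_of_mul hab0
    have hb0 : b ≠ 0 := right_ne_zero_of_mul hab0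
    set a' : E[X] := a * C a.leadingCoeff⁻¹ with ha'
    have hma' : a'.Monic := monic_mul_leadingCoeff_inv ha0
    have haa : a' * C a.leadingCoeff = a := by
      rw [ha', mul_assoc, ← C_mul, inv_mul_cancel₀ (leadingCoeff_ne_zero.mpr ha0), C_1, mul_one]
    have hda' : a' ∣ f.map (algebraMap F E) :=
      dvd_trans ⟨C a.leadingCoeff, haa.symm⟩ ⟨b, hab⟩
    -- a' has coefficients integral over F, hence in F
    have hlift : a' ∈ lifts (algebraMap F E) := by
      have h1 := integralClosure.mem_lifts_of_monic_of_dvd_map E hm hma' hda'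
      rw [lifts_iff_coeff_lifts] at h1 ⊢
      intro n
      obtain ⟨y, hy⟩ := h1 n
      obtain ⟨z, hz⟩ := IntermediateField.mem_bot.mp (halg (a'.coeff n) (hy ▸ y.2))
      exact ⟨z, hz⟩
    obtain ⟨a₀, ha₀map, ha₀deg, ha₀m⟩ := lifts_and_degree_eq_and_monic hlift hma'
    have hdvd : a₀ ∣ f := by
      rw [← map_dvd_map (algebraMap F E) hinj ha₀m, ha₀map]
      exact hda'
    obtain ⟨c, hc⟩ := hdvd
    have hdeq : a'.degree = a.degree := by
      rw [ha']; exact Polynomial.degree_mul_leadingCoeff_inv a ha0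
    rcases hirr.isUnit_or_isUnit hc with hu | hu
    · -- a₀ unit ⇒ a has degree 0 ⇒ a unit, contradiction
      have : a.degree = 0 := by
        have h0 : a₀.degree = 0 := Polynomial.isUnit_iff_degree_eq_zero.mp hu
        rw [← hdeq, ← ha₀deg, h0]
      exact ha (Polynomial.isUnit_iff_degree_eq_zero.mpr this)
    · -- c unit ⇒ deg f = deg a ⇒ b has degree 0 ⇒ b unit, contradiction
      have hdc : c.degree = 0 := Polynomial.isUnit_iff_degree_eq_zero.mp hu
      have hfa : f.degree = a.degree := by
        rw [hc, Polynomial.degree_mul, hdc, add_zero, ha₀deg, hdeq]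
      have hn : f.natDegree = a.natDegree + b.natDegree := by
        have h2 := congrArg Polynomial.natDegree hab
        rwa [Polynomial.natDegree_map_eq_of_injective hinj, Polynomial.natDegree_mul ha0 hb0] at h2
      have hna : f.natDegree = a.natDegree := by
        rw [Polynomial.natDegree, Polynomial.natDegree, hfa]
      have hnb : b.natDegree = 0 := by omega
      obtain ⟨u, hu'⟩ : ∃ u : E, b = Polynomial.C u := ⟨b.coeff 0, Polynomial.eq_C_of_natDegree_eq_zero hnb⟩
      rw [hu'] at hb hb0
      refine hb (Polynomial.isUnit_C.mpr (IsUnit.mk0 u fun h0 => hb0 ?_))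
      rw [h0, map_zero]

set_option maxHeartbeats 1000000 in
set_option synthInstance.maxHeartbeats 400000 in
/-- Let `k` be a perfect field, `K` a finitely generated field extension of `k`, and `k′`
the algebraic closure of `k` in `K` (the intermediate field of all elements of `K`
algebraic over `k`). Let `κ` be a field extension of `k′` of finite degree. Then
`K ⊗_{k′} κ` is a field, and the field extension `(K ⊗_{k′} κ)/K` (where `K` is embedded
as `K ⊗ 1`) has degree `[κ : k′]`. -/
theorem tensor_with_finite_extension_isField
    {k K : Type*} [Field k] [PerfectField k] [Field K] [Algebra k K]
    (hfg : ∃ s : Finset K, IntermediateField.adjoin k (s : Set K) = ⊤)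
    (κ : Type*) [Field κ] [Algebra (algebraicClosure k K) κ]
    [FiniteDimensional (algebraicClosure k K) κ] :
    IsField (K ⊗[algebraicClosure k K] κ) ∧
      Module.finrank K (K ⊗[algebraicClosure k K] κ) =
        Module.finrank (algebraicClosure k K) κ := by
  -- κ is separable over (algebraicClosure k K)
  letI : Algebra k κ := ((algebraMap (algebraicClosure k K) κ).comp (algebraMap k (algebraicClosure k K))).toAlgebra
  haveI : IsScalarTower k (algebraicClosure k K) κ := IsScalarTower.of_algebraMap_eq fun x => rfl
  haveI : Algebra.IsAlgebraic (algebraicClosure k K) κ := Algebra.IsAlgebraic.of_finite (algebraicClosure k K) κ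
  haveI : Algebra.IsAlgebraic k κ := Algebra.IsAlgebraic.trans k (algebraicClosure k K) κ
  haveI : Algebra.IsSeparable k κ := inferInstance
  haveI : Algebra.IsSeparable (algebraicClosure k K) κ := Algebra.isSeparable_tower_top_of_isSeparable k (algebraicClosure k K) κ
  -- primitive element
  obtain ⟨α, hα⟩ := Field.exists_primitive_element (algebraicClosure k K) κ
  have hint : IsIntegral (algebraicClosure k K) α := Algebra.IsIntegral.isIntegral α
  set f : Polynomial (algebraicClosure k K) := minpoly (algebraicClosure k K) α with hf
  have hfm : f.Monic := minpoly.monic hint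
  have hfirr : Irreducible f := minpoly.irreducible hint
  set g : Polynomial K := f.map (algebraMap (algebraicClosure k K) K) with hg
  have hgirr : Irreducible g := by
    refine irreducible_map_of_integral_mem_bot ?_ hfm hfirr
    intro x hx
    have := algebraicClosure.algebraicClosure_eq_bot k K
    rw [← this]
    exact mem_algebraicClosure_iff'.mpr hx
  haveI := Fact.mk hgirr
  have hg0 : g ≠ 0 := hgirr.ne_zero
  -- the (algebraicClosure k K)-algebra equiv κ ≃ AdjoinRoot f
  let eκ : AdjoinRoot f ≃ₐ[(algebraicClosure k K)] κ :=
    (IntermediateField.adjoinRootEquivAdjoin (algebraicClosure k K) hint).trans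
      ((IntermediateField.equivOfEq hα).trans IntermediateField.topEquiv)
  -- map κ → AdjoinRoot g
  have h0 : Polynomial.aeval (AdjoinRoot.root g) f = 0 := by
    rw [Polynomial.aeval_def, IsScalarTower.algebraMap_eq (algebraicClosure k K) K (AdjoinRoot g),
      ← Polynomial.eval₂_map, ← hg, AdjoinRoot.algebraMap_eq]
    exact AdjoinRoot.eval₂_root g
  let ψ : κ →ₐ[(algebraicClosure k K)] AdjoinRoot g := (AdjoinRoot.liftAlgHom f (Algebra.ofId _ _) (AdjoinRoot.root g)
    (by rw [Algebra.toRingHom_ofId, ← Polynomial.aeval_def]; exact h0)).comp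
    eκ.symm.toAlgHom
  let φ : K ⊗[(algebraicClosure k K)] κ →ₐ[K] AdjoinRoot g :=
    Algebra.TensorProduct.lift (Algebra.ofId K (AdjoinRoot g)) ψ (fun x y => Commute.all _ _)
  have hsurj : Function.Surjective φ := by
    rw [← AlgHom.range_eq_top, ← top_le_iff, ← AdjoinRoot.adjoinRoot_eq_top (f := g),
      Algebra.adjoin_le_iff]
    rintro x rfl
    refine ⟨(1 : K) ⊗ₜ[(algebraicClosure k K)] (eκ (AdjoinRoot.root f)), ?_⟩
    show φ _ = _
    rw [Algebra.TensorProduct.lift_tmul, map_one, one_mul]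
    show (AdjoinRoot.liftAlgHom f (Algebra.ofId _ _) (AdjoinRoot.root g)
      (by rw [Algebra.toRingHom_ofId, ← Polynomial.aeval_def]; exact h0)) (eκ.symm (eκ (AdjoinRoot.root f))) = _
    rw [AlgEquiv.symm_apply_apply, AdjoinRoot.liftAlgHom_root]
  haveI : FiniteDimensional K (AdjoinRoot g) := (AdjoinRoot.powerBasis hg0).finite
  have hrank : Module.finrank K (K ⊗[(algebraicClosure k K)] κ) = Module.finrank (algebraicClosure k K) κ := Module.finrank_baseChange
  have hrank2 : Module.finrank K (K ⊗[(algebraicClosure k K)] κ) = Module.finrank K (AdjoinRoot g) := by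
    rw [hrank, eκ.symm.toLinearEquiv.finrank_eq,
      (AdjoinRoot.powerBasis hfm.ne_zero).finrank, (AdjoinRoot.powerBasis hg0).finrank]
    show f.natDegree = g.natDegree
    rw [hg, Polynomial.natDegree_map_eq_of_injective (algebraMap (algebraicClosure k K) K).injective]
  have hinj : Function.Injective φ :=
    (LinearMap.injective_iff_surjective_of_finrank_eq_finrank hrank2
      (f := φ.toLinearMap)).mpr hsurj
  refine ⟨MulEquiv.isField (Field.toIsField _)
    (AlgEquiv.ofBijective φ ⟨hinj, hsurj⟩).toMulEquiv, hrank⟩
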